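/- Let α : 𝕋 → 𝕋 be a minimal homeomorphism of the circle and let n > 1 be an integer. Then there exist finitely many pairwise disjoint nonempty open arcs J₁, …, J_k of 𝕋 and positive integers h(1), …, h(k) such that: (1) the sets α^j(J_i), for 1 ≤ i ≤ k and 0 ≤ j ≤ h(i) − 1, are pairwise disjoint; (2) h(i) ≥ n for every 1 ≤ i ≤ k; (3) the complement 𝕋 ∖ ⋃_{i=1}^{k} ⋃_{j=0}^{h(i)−1} α^j(J_i) is a finite set. -/

import Mathlib

open Set Function

/-- An *open arc* of the circle: a nonempty connected open proper subset. -/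
def IsOpenArc (J : Set Circle) : Prop :=
  IsOpen J ∧ IsConnected J ∧ J ≠ Set.univ

/-- A homeomorphism of the circle is *minimal* if every (two-sided) orbit is dense. -/
def IsMinimalCircleHomeo (α : Circle ≃ₜ Circle) : Prop :=
  ∀ x : Circle, Dense (Set.range fun n : ℤ => (α.toEquiv ^ n) x)

namespace Rokh

lemma circleInfinite : Infinite Circle := by
  have : Infinite (Ioc (-Real.pi) Real.pi) := by
    rw [Set.infinite_coe_iff]
    exact Set.Ioc_infinite (neg_lt_self Real.pi_pos)
  exact Infinite.of_injective _ Circle.argEquiv.symm.injective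

variable (α : Circle ≃ₜ Circle)

lemma succ_apply (n : ℤ) (x : Circle) : (α.toEquiv ^ (n + 1)) x = α ((α.toEquiv ^ n) x) := by
  rw [add_comm, zpow_add, zpow_one, Equiv.Perm.mul_apply]; rfl

lemma pred_apply (n : ℤ) (x : Circle) :
    (α.toEquiv ^ (n - 1)) x = α.symm ((α.toEquiv ^ n) x) := by
  rw [sub_eq_add_neg, add_comm, zpow_add, zpow_neg_one, Equiv.Perm.mul_apply]; rfl

lemma eq_univ_of_invariant (hmin : IsMinimalCircleHomeo α) {C : Set Circle}
    (hcl : IsClosed C) (hne : C.Nonempty) (hinv : α '' C = C) : C = univ := by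
  obtain ⟨y, hy⟩ := hne
  have hfwd : ∀ z ∈ C, α z ∈ C := fun z hz => hinv ▸ mem_image_of_mem _ hz
  have hback : ∀ z ∈ C, α.symm z ∈ C := by
    intro z hz
    rw [← hinv] at hz
    obtain ⟨w, hw, rfl⟩ := hz
    simpa using hw
  have hmem : ∀ n : ℤ, (α.toEquiv ^ n) y ∈ C := by
    intro n
    induction n using Int.induction_on with
    | zero => simpa using hy
    | succ n ih => rw [succ_apply]; exact hfwd _ ih
    | pred n ih =>
        have : ((-n : ℤ) - 1) = (-n : ℤ) - 1 := rfl
        rw [show (-(n : ℤ) - 1) = (-n : ℤ) - 1 from rfl, pred_apply]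
        exact hback _ ih
  have h1 := closure_minimal (range_subset_iff.2 hmem) hcl
  rw [(hmin y).closure_eq] at h1
  exact univ_subset_iff.mp h1

lemma exists_forward (hmin : IsMinimalCircleHomeo α) {U : Set Circle} (hU : IsOpen U)
    (hne : U.Nonempty) (x : Circle) : ∃ m : ℕ, (⇑α)^[m + 1] x ∈ U := by
  set C : ℕ → Set Circle := fun N => closure (range fun m : ℕ => (⇑α)^[m + N] x) with hC
  have hsub : ∀ N, (range fun m : ℕ => (⇑α)^[m + (N + 1)] x) ⊆
      range fun m : ℕ => (⇑α)^[m + N] x := by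
    rintro N _ ⟨m, rfl⟩
    refine ⟨m + 1, ?_⟩
    show (⇑α)^[m + 1 + N] x = (⇑α)^[m + (N + 1)] x
    rw [show m + 1 + N = m + (N + 1) from by omega]
  have hCd : ∀ N, C (N + 1) ⊆ C N := fun N => closure_mono (hsub N)
  have hCne : ∀ N, (C N).Nonempty := fun N => (range_nonempty _).closure
  have hCcl : ∀ N, IsClosed (C N) := fun N => isClosed_closure
  have hK := IsCompact.nonempty_iInter_of_sequence_nonempty_isCompact_isClosed C hCd hCne
    ((hCcl 0).isCompact) hCcl
  have himg : ∀ N, α '' C N = C (N + 1) := by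
    intro N
    rw [hC, Homeomorph.image_closure, ← range_comp]
    have heq : (⇑α ∘ fun m : ℕ => (⇑α)^[m + N] x) = fun m : ℕ => (⇑α)^[m + (N + 1)] x := by
      funext m
      simp only [comp_apply]
      rw [← Function.iterate_succ_apply' (⇑α), Nat.succ_eq_add_one, show m + N + 1 = m + (N + 1) from by omega]
    rw [heq]
  have hinv : α '' (⋂ N, C N) = ⋂ N, C N := by
    rw [Set.image_iInter α.bijective]
    apply Subset.antisymm
    · intro z hz
      simp only [mem_iInter] at hz ⊢
      intro N
      exact hCd N (himg N ▸ hz N)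
    · intro z hz
      simp only [mem_iInter] at hz ⊢
      intro N
      rw [himg N]
      exact hz (N + 1)
  have huniv := eq_univ_of_invariant α hmin (isClosed_iInter hCcl) hK hinv
  have hC1 : Dense (range fun m : ℕ => (⇑α)^[m + 1] x) := by
    rw [dense_iff_closure_eq]
    apply eq_univ_of_univ_subset
    rw [← huniv]
    exact iInter_subset _ 1
  obtain ⟨z, ⟨m, rfl⟩, hzU⟩ := hC1.exists_mem_open hU hne
  exact ⟨m, hzU⟩

lemma minimal_symm (hmin : IsMinimalCircleHomeo α) : IsMinimalCircleHomeo α.symm := by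
  intro x
  have key : ∀ n : ℤ, (α.symm.toEquiv ^ n) x = (α.toEquiv ^ (-n)) x := by
    intro n
    rw [zpow_neg, ← inv_zpow]
    rfl
  have : (range fun n : ℤ => (α.symm.toEquiv ^ n) x)
      = range fun n : ℤ => (α.toEquiv ^ n) x := by
    ext z
    simp only [mem_range, key]
    constructor
    · rintro ⟨n, rfl⟩; exact ⟨-n, rfl⟩
    · rintro ⟨n, rfl⟩; exact ⟨-n, by rw [neg_neg]⟩
  rw [this]
  exact hmin x

lemma not_periodic (hmin : IsMinimalCircleHomeo α) (x : Circle) {p : ℕ} (hp : 0 < p) :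
    (⇑α)^[p] x ≠ x := by
  intro hper
  have hrep : ∀ n : ℤ, ∃ j < p, (α.toEquiv ^ n) x = (⇑α)^[j] x := by
    intro n
    induction n using Int.induction_on with
    | zero => exact ⟨0, hp, rfl⟩
    | succ n ih =>
        obtain ⟨j, hj, hjeq⟩ := ih
        rcases eq_or_lt_of_le (Nat.succ_le_of_lt hj) with h | h
        · refine ⟨0, hp, ?_⟩
          rw [succ_apply, hjeq, ← Function.iterate_succ_apply' (⇑α), h, hper]
          rfl
        · exact ⟨j + 1, h, by rw [succ_apply, hjeq, ← Function.iterate_succ_apply' (⇑α)]⟩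
    | pred n ih =>
        obtain ⟨j, hj, hjeq⟩ := ih
        rcases Nat.eq_zero_or_pos j with h | h
        · refine ⟨p - 1, by omega, ?_⟩
          rw [show (-(n : ℤ) - 1) = (-n : ℤ) - 1 from rfl, pred_apply, hjeq, h]
          simp only [Function.iterate_zero_apply]
          nth_rewrite 1 [← hper]
          rw [show p = (p - 1) + 1 from by omega, Function.iterate_succ_apply' (⇑α)]
          simp
        · refine ⟨j - 1, by omega, ?_⟩
          rw [show (-(n : ℤ) - 1) = (-n : ℤ) - 1 from rfl, pred_apply, hjeq,
            show j = (j - 1) + 1 from by omega, Function.iterate_succ_apply' (⇑α)]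
          simp
  have hfin : (range fun n : ℤ => (α.toEquiv ^ n) x).Finite := by
    have hsub : (range fun n : ℤ => (α.toEquiv ^ n) x) ⊆ (fun j : ℕ => (⇑α)^[j] x) '' (Iio p) := by
      rintro _ ⟨n, rfl⟩
      obtain ⟨j, hj, hjeq⟩ := hrep n
      exact ⟨j, hj, hjeq.symm⟩
    exact Set.Finite.subset ((Set.finite_Iio p).image _) hsub
  have hclosed : IsClosed (range fun n : ℤ => (α.toEquiv ^ n) x) := hfin.isClosed
  have huniv : (range fun n : ℤ => (α.toEquiv ^ n) x) = univ := by
    rw [← hclosed.closure_eq, (hmin x).closure_eq]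
  have hfinC : Finite Circle := Set.finite_univ_iff.mp (huniv ▸ hfin)
  haveI := circleInfinite
  exact not_finite Circle

section ReturnTime

attribute [local instance] Classical.propDecidable

variable {α : Circle ≃ₜ Circle} {U : Set Circle}

noncomputable def ret (hmain : ∀ y : Circle, ∃ m : ℕ, (⇑α)^[m + 1] y ∈ U) (y : Circle) : ℕ :=
  Nat.find (hmain y) + 1

lemma ret_pos (hmain : ∀ y : Circle, ∃ m : ℕ, (⇑α)^[m + 1] y ∈ U) (y : Circle) :
    0 < ret hmain y := Nat.succ_pos _

lemma ret_spec (hmain : ∀ y : Circle, ∃ m : ℕ, (⇑α)^[m + 1] y ∈ U) (y : Circle) :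
    (⇑α)^[ret hmain y] y ∈ U := Nat.find_spec (hmain y)

lemma ret_min (hmain : ∀ y : Circle, ∃ m : ℕ, (⇑α)^[m + 1] y ∈ U) (y : Circle) {j : ℕ}
    (h1 : 0 < j) (h2 : j < ret hmain y) : (⇑α)^[j] y ∉ U := by
  have := Nat.find_min (hmain y) (m := j - 1) (by unfold ret at h2; omega)
  rwa [show j - 1 + 1 = j from by omega] at this

lemma ret_le (hmain : ∀ y : Circle, ∃ m : ℕ, (⇑α)^[m + 1] y ∈ U) (y : Circle) {j : ℕ}
    (h1 : 0 < j) (h2 : (⇑α)^[j] y ∈ U) : ret hmain y ≤ j := by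
  have hpn : (⇑α)^[(j - 1) + 1] y ∈ U := by rwa [show j - 1 + 1 = j from by omega]
  have := Nat.find_min' (hmain y) hpn
  unfold ret
  omega

lemma iter_symm (α : Circle ≃ₜ Circle) (r : ℕ) (v : Circle) :
    (⇑α)^[r] ((⇑α.symm)^[r] v) = v := by
  induction r generalizing v with
  | zero => simp
  | succ r ih =>
      rw [Function.iterate_succ_apply' (⇑α.symm), Function.iterate_succ_apply (⇑α),
        α.apply_symm_apply]
      exact ih v

lemma tower_disj (hmain : ∀ y : Circle, ∃ m : ℕ, (⇑α)^[m + 1] y ∈ U) {y z : Circle} {i j : ℕ}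
    (hy : y ∈ U) (hz : z ∈ U) (hi : i < ret hmain y) (hj : j < ret hmain z)
    (heq : (⇑α)^[i] y = (⇑α)^[j] z) : i = j ∧ y = z := by
  have key : ∀ y z : Circle, ∀ i j : ℕ, y ∈ U → z ∈ U → i < ret hmain y → j < ret hmain z →
      i ≤ j → (⇑α)^[i] y = (⇑α)^[j] z → i = j ∧ y = z := by
    intro y z i j hy hz hi hj hij heq
    have hiter : (⇑α)^[j] z = (⇑α)^[i] ((⇑α)^[j - i] z) := by
      rw [← Function.iterate_add_apply, show i + (j - i) = j from by omega]
    have hinj : Function.Injective ((⇑α)^[i]) := (α.injective).iterate i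
    have hyz : y = (⇑α)^[j - i] z := hinj (by rw [heq, hiter])
    rcases eq_or_lt_of_le hij with h | h
    · exact ⟨h, by subst h; exact hinj heq⟩
    · exfalso
      exact ret_min hmain z (by omega) (by omega) (hyz ▸ hy)
  rcases le_total i j with h | h
  · exact key y z i j hy hz hi hj h heq
  · obtain ⟨h1, h2⟩ := key z y j i hz hy hj hi h heq.symm
    exact ⟨h1.symm, h2.symm⟩

lemma tower_cover (hmain : ∀ y : Circle, ∃ m : ℕ, (⇑α)^[m + 1] y ∈ U)
    (hback : ∀ w : Circle, ∃ m : ℕ, (⇑α.symm)^[m + 1] w ∈ U) (w : Circle) :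
    ∃ y ∈ U, ∃ m : ℕ, m < ret hmain y ∧ (⇑α)^[m] y = w := by
  have hex : ∃ m : ℕ, (⇑α.symm)^[m] w ∈ U := by
    obtain ⟨m, hm⟩ := hback w; exact ⟨m + 1, hm⟩
  set e := Nat.find hex with he
  have hspec : (⇑α.symm)^[e] w ∈ U := Nat.find_spec hex
  refine ⟨(⇑α.symm)^[e] w, hspec, e, ?_, iter_symm α e w⟩
  by_contra hle
  push_neg at hle
  set r := ret hmain ((⇑α.symm)^[e] w) with hr
  have hr1 : 0 < r := ret_pos hmain _
  have hrU : (⇑α)^[r] ((⇑α.symm)^[e] w) ∈ U := ret_spec hmain _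
  have hkey : (⇑α)^[r] ((⇑α.symm)^[e] w) = (⇑α.symm)^[e - r] w := by
    rw [show e = r + (e - r) from by omega, Function.iterate_add_apply, iter_symm α r]
    rw [show r + (e - r) - r = e - r from by omega]
  exact Nat.find_min hex (m := e - r) (by omega) (hkey ▸ hrU)

end ReturnTime

lemma expInjOn {c d : ℝ} (h : d - c < 2 * Real.pi) {s t : ℝ} (hs : s ∈ Icc c d)
    (ht : t ∈ Icc c d) (he : Circle.exp s = Circle.exp t) : s = t := by
  obtain ⟨m, hm⟩ := Circle.exp_eq_exp.mp he
  by_cases hm0 : m = 0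
  · rw [hm, hm0]; simp
  · exfalso
    have h1 : (1 : ℝ) ≤ |(m : ℝ)| := by
      rw [← Int.cast_abs]
      exact_mod_cast Int.one_le_abs hm0
    have h2 : |s - t| ≤ d - c := by
      rw [abs_sub_le_iff]
      constructor <;> [linarith [hs.2, ht.1]; linarith [hs.1, ht.2]]
    have h3 : s - t = (m : ℝ) * (2 * Real.pi) := by linarith [hm]
    rw [h3, abs_mul, abs_of_pos (by positivity : (0 : ℝ) < 2 * Real.pi)] at h2
    nlinarith [Real.pi_pos]

end Rokh

set_option maxHeartbeats 1000000 in
open Rokh in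
theorem stmt8 (α : Circle ≃ₜ Circle) (hmin : IsMinimalCircleHomeo α)
    (n : ℕ) (hn : 1 < n) :
    ∃ (k : ℕ) (J : Fin k → Set Circle) (h : Fin k → ℕ),
      0 < k ∧
      (∀ i, IsOpenArc (J i)) ∧
      (∀ i, n ≤ h i) ∧
      (∀ i i' : Fin k, ∀ j j' : ℕ, j ≤ h i - 1 → j' ≤ h i' - 1 →
        (i, j) ≠ (i', j') →
          Disjoint ((⇑α)^[j] '' J i) ((⇑α)^[j'] '' J i')) ∧
      (Set.univ \ ⋃ i, ⋃ j ∈ Set.Iic (h i - 1), (⇑α)^[j] '' J i).Finite := by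
  classical
  set x : Circle := 1 with hx
  -- distinct orbit points
  have hdist : ∀ i j : ℕ, i < n → j < n → i ≠ j → (⇑α)^[i] x ≠ (⇑α)^[j] x := by
    have key : ∀ i j : ℕ, i < j → (⇑α)^[i] x ≠ (⇑α)^[j] x := by
      intro i j hij heq
      apply Rokh.not_periodic α hmin ((⇑α)^[i] x) (p := j - i) (by omega)
      rw [← Function.iterate_add_apply, show j - i + i = j from by omega, ← heq]
    intro i j _ _ hne heq
    rcases lt_or_gt_of_ne hne with h | h
    · exact key i j h heq
    · exact key j i h heq.symm
  -- minimal separation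
  obtain ⟨δ, hδpos, hδle⟩ : ∃ δ : ℝ, 0 < δ ∧ ∀ i j : ℕ, i < n → j < n → i ≠ j →
      δ ≤ dist ((⇑α)^[i] x) ((⇑α)^[j] x) := by
    set Pairs : Finset (ℕ × ℕ) :=
      (Finset.range n ×ˢ Finset.range n).filter (fun p => p.1 ≠ p.2) with hPairs
    have hPne : Pairs.Nonempty := ⟨(0, 1), by simp [hPairs]; omega⟩
    obtain ⟨p0, hp0mem, hp0min⟩ :=
      Pairs.exists_min_image (fun p : ℕ × ℕ => dist ((⇑α)^[p.1] x) ((⇑α)^[p.2] x)) hPne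
    refine ⟨dist ((⇑α)^[p0.1] x) ((⇑α)^[p0.2] x), ?_, ?_⟩
    · simp only [hPairs, Finset.mem_filter, Finset.mem_product, Finset.mem_range] at hp0mem
      exact dist_pos.mpr (hdist _ _ hp0mem.1.1 hp0mem.1.2 hp0mem.2)
    · intro i j hi hj hne
      exact hp0min (i, j) (by simp [hPairs, hi, hj, hne])
  -- sum-of-distances function
  set G : Circle → ℝ := fun y => ∑ j ∈ Finset.range n, dist ((⇑α)^[j] y) ((⇑α)^[j] x) with hG
  have hGcont : Continuous G := by
    apply continuous_finset_sum
    intro j _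
    exact Continuous.dist ((α.continuous).iterate j) continuous_const
  obtain ⟨ε, hεpos, hεsub⟩ : ∃ ε > 0, ∀ y, dist y x < ε → G y < δ / 3 := by
    have hc := Metric.continuousAt_iff.mp (hGcont.continuousAt (x := x)) (ε := δ / 3) (by linarith)
    obtain ⟨ε, hε, hc⟩ := hc
    refine ⟨ε, hε, fun y hy => ?_⟩
    have := hc hy
    have hGx : G x = 0 := by simp [hG]
    rw [hGx, Real.dist_eq, sub_zero] at this
    exact lt_of_le_of_lt (le_abs_self _) this
  have hGsingle : ∀ y : Circle, ∀ j < n, dist ((⇑α)^[j] y) ((⇑α)^[j] x) ≤ G y := by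
    intro y j hj
    simp only [hG]
    exact Finset.single_le_sum (f := fun m => dist ((⇑α)^[m] y) ((⇑α)^[m] x))
      (fun m _ => dist_nonneg) (Finset.mem_range.mpr hj)
  -- separation of iterates on the ε-ball
  have hsep : ∀ y z : Circle, dist y x < ε → dist z x < ε → ∀ i j : ℕ, i < n → j < n →
      i ≠ j → (⇑α)^[i] y ≠ (⇑α)^[j] z := by
    intro y z hy hz i j hi hj hne heq
    have h1 : dist ((⇑α)^[i] y) ((⇑α)^[i] x) < δ / 3 :=
      lt_of_le_of_lt (hGsingle y i hi) (hεsub y hy)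
    have h2 : dist ((⇑α)^[j] z) ((⇑α)^[j] x) < δ / 3 :=
      lt_of_le_of_lt (hGsingle z j hj) (hεsub z hz)
    have h3 : δ ≤ dist ((⇑α)^[i] x) ((⇑α)^[j] x) := hδle i j hi hj hne
    have h4 : dist ((⇑α)^[i] x) ((⇑α)^[j] x) ≤
        dist ((⇑α)^[i] x) ((⇑α)^[i] y) + dist ((⇑α)^[i] y) ((⇑α)^[j] z)
          + dist ((⇑α)^[j] z) ((⇑α)^[j] x) := dist_triangle4 _ _ _ _
    have h5 : dist ((⇑α)^[i] y) ((⇑α)^[j] z) = 0 := by rw [heq]; simp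
    have h6 : dist ((⇑α)^[i] x) ((⇑α)^[i] y) = dist ((⇑α)^[i] y) ((⇑α)^[i] x) := dist_comm _ _
    linarith
  -- the base arc
  obtain ⟨ρ₀, hρ₀pos, hρ₀⟩ : ∃ r > 0, ∀ t : ℝ, dist t 0 < r → dist (Circle.exp t) x < ε := by
    have hc := Metric.continuousAt_iff.mp (Circle.exp.continuous.continuousAt (x := 0))
      (ε := ε) hεpos
    obtain ⟨r, hr, hc⟩ := hc
    refine ⟨r, hr, fun t ht => ?_⟩
    have := hc ht
    rwa [Circle.exp_zero] at this
  set ρ : ℝ := min (ρ₀ / 2) 1 with hρ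
  have hρpos : 0 < ρ := by positivity
  have hρle : ρ ≤ 1 := min_le_right _ _
  have hρlt : ∀ t ∈ Icc (-ρ) ρ, dist (Circle.exp t) x < ε := by
    intro t ht
    apply hρ₀
    rw [Real.dist_eq, sub_zero]
    have h1 : |t| ≤ ρ := abs_le.mpr ⟨ht.1, ht.2⟩
    have h2 : ρ ≤ ρ₀ / 2 := min_le_left _ _
    linarith
  set U : Set Circle := Circle.exp '' Ioo (-ρ) ρ with hU
  have hUopen : IsOpen U := isLocalHomeomorph_circleExp.isOpenMap _ isOpen_Ioo
  have h0mem : (0 : ℝ) ∈ Ioo (-ρ) ρ := ⟨by linarith, hρpos⟩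
  have hUne : U.Nonempty := ⟨_, mem_image_of_mem _ h0mem⟩
  have hlen : ρ - -ρ < 2 * Real.pi := by
    have := Real.pi_gt_three
    linarith
  have hinj : ∀ s ∈ Icc (-ρ) ρ, ∀ t ∈ Icc (-ρ) ρ, Circle.exp s = Circle.exp t → s = t :=
    fun s hs t ht he => Rokh.expInjOn hlen hs ht he
  have hUB : ∀ y ∈ U, dist y x < ε := by
    rintro y ⟨t, ht, rfl⟩
    exact hρlt t (Ioo_subset_Icc_self ht)
  -- return times
  have hmain : ∀ y : Circle, ∃ m : ℕ, (⇑α)^[m + 1] y ∈ U :=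
    Rokh.exists_forward α hmin hUopen hUne
  have hback : ∀ w : Circle, ∃ m : ℕ, (⇑α.symm)^[m + 1] w ∈ U :=
    Rokh.exists_forward α.symm (Rokh.minimal_symm α hmin) hUopen hUne
  obtain ⟨M, hM⟩ : ∃ M : ℕ, ∀ y, Rokh.ret hmain y ≤ M := by
    have hcov : (univ : Set Circle) ⊆ ⋃ m : ℕ, (fun y => (⇑α)^[m + 1] y) ⁻¹' U := by
      intro y _
      obtain ⟨m, hm⟩ := hmain y
      exact mem_iUnion.mpr ⟨m, hm⟩
    obtain ⟨t, ht⟩ := isCompact_univ.elim_finite_subcover _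
      (fun m : ℕ => hUopen.preimage ((α.continuous).iterate (m + 1))) hcov
    refine ⟨t.sup id + 1, fun y => ?_⟩
    obtain ⟨m, hmt, hmy⟩ : ∃ m ∈ t, (⇑α)^[m + 1] y ∈ U := by
      simpa using ht (mem_univ y)
    have h1 : Rokh.ret hmain y ≤ m + 1 := Rokh.ret_le hmain y (by omega) hmy
    have h2 : m ≤ t.sup id := Finset.le_sup (f := id) hmt
    omega
  have hretn : ∀ y ∈ U, n ≤ Rokh.ret hmain y := by
    intro y hy
    by_contra hlt
    push_neg at hlt
    have h1 : (⇑α)^[Rokh.ret hmain y] y ∈ U := Rokh.ret_spec hmain y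
    have h0 := Rokh.ret_pos hmain y
    exact hsep ((⇑α)^[Rokh.ret hmain y] y) y (hUB _ h1) (hUB _ hy) 0 (Rokh.ret hmain y)
      (by omega) hlt (by omega) (by simp)
  -- the exceptional finite set
  set E : Set Circle := {Circle.exp (-ρ), Circle.exp ρ} with hE
  set F : Set Circle := {y ∈ U | ∃ j, 1 ≤ j ∧ j ≤ M ∧ (⇑α)^[j] y ∈ E} with hF
  have hEfin : E.Finite := (Set.finite_singleton _).insert _
  have hFfin : F.Finite := by
    have h1 : F ⊆ ⋃ j ∈ Icc 1 M, (fun y => (⇑α)^[j] y) ⁻¹' E := by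
      rintro y ⟨hyU, j, h1, h2, h3⟩
      exact mem_iUnion₂.mpr ⟨j, ⟨h1, h2⟩, h3⟩
    apply Set.Finite.subset _ h1
    apply Set.Finite.biUnion (Set.finite_Icc 1 M)
    intro j _
    exact Set.Finite.preimage (Set.injOn_of_injective ((α.injective).iterate j)) hEfin
  have hclU : closure U ⊆ U ∪ E := by
    have h1 : closure U ⊆ Circle.exp '' Icc (-ρ) ρ :=
      closure_minimal (image_mono Ioo_subset_Icc_self)
        ((isCompact_Icc.image Circle.exp.continuous).isClosed)
    refine h1.trans ?_
    rintro _ ⟨t, ht, rfl⟩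
    rcases eq_or_lt_of_le ht.1 with h | h
    · right; rw [hE]; left; rw [← h]
    rcases eq_or_lt_of_le ht.2 with h2 | h2
    · right; rw [hE]; right; rw [h2]; rfl
    · left; exact mem_image_of_mem _ ⟨h, h2⟩
  -- local constancy of the return time off F
  have hloc : ∀ y ∈ U \ F, ∃ V : Set Circle, IsOpen V ∧ y ∈ V ∧
      ∀ z ∈ V, Rokh.ret hmain z = Rokh.ret hmain y := by
    rintro y ⟨hyU, hyF⟩
    refine ⟨(fun w => (⇑α)^[Rokh.ret hmain y] w) ⁻¹' U ∩
      ⋂ j ∈ Finset.Ico 1 (Rokh.ret hmain y), (fun w => (⇑α)^[j] w) ⁻¹' (closure U)ᶜ,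
      ?_, ⟨?_, ?_⟩, ?_⟩
    · exact (hUopen.preimage (α.continuous.iterate _)).inter
        (isOpen_biInter_finset (fun j _ =>
          (isClosed_closure.isOpen_compl).preimage (α.continuous.iterate j)))
    · exact Rokh.ret_spec hmain y
    · simp only [mem_iInter, Finset.mem_Ico, mem_preimage, mem_compl_iff]
      rintro j ⟨hj1, hj2⟩ hmem
      rcases hclU hmem with h | h
      · exact Rokh.ret_min hmain y (by omega) hj2 h
      · refine hyF ⟨hyU, j, hj1, ?_, h⟩
        have := hM y
        omega
    · rintro z ⟨hz1, hz2⟩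
      simp only [mem_iInter, Finset.mem_Ico, mem_preimage, mem_compl_iff] at hz2
      have hle : Rokh.ret hmain z ≤ Rokh.ret hmain y :=
        Rokh.ret_le hmain z (Rokh.ret_pos hmain y) hz1
      have hge : ¬ Rokh.ret hmain z < Rokh.ret hmain y := by
        intro hlt
        exact hz2 _ ⟨Rokh.ret_pos hmain z, hlt⟩
          (subset_closure (Rokh.ret_spec hmain z))
      omega
  -- the return time is constant on preconnected subsets of U \ F
  have hconst : ∀ Gs : Set Circle, Gs ⊆ U \ F → IsPreconnected Gs → ∀ y ∈ Gs, ∀ z ∈ Gs,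
      Rokh.ret hmain y = Rokh.ret hmain z := by
    intro Gs hGsub hGc y hy z hz
    by_contra hne
    choose V hVopen hVmem hVconst using hloc
    set O1 : Set Circle := ⋃ (w : Circle) (h : w ∈ Gs)
      (_ : Rokh.ret hmain w = Rokh.ret hmain y), V w (hGsub h) with hO1
    set O2 : Set Circle := ⋃ (w : Circle) (h : w ∈ Gs)
      (_ : Rokh.ret hmain w ≠ Rokh.ret hmain y), V w (hGsub h) with hO2
    have h1 : IsOpen O1 := isOpen_iUnion fun w => isOpen_iUnion fun h =>
      isOpen_iUnion fun _ => hVopen _ _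
    have h2 : IsOpen O2 := isOpen_iUnion fun w => isOpen_iUnion fun h =>
      isOpen_iUnion fun _ => hVopen _ _
    have hcover : Gs ⊆ O1 ∪ O2 := by
      intro w hw
      by_cases hc : Rokh.ret hmain w = Rokh.ret hmain y
      · left
        rw [hO1]
        exact mem_iUnion.mpr ⟨w, mem_iUnion.mpr ⟨hw, mem_iUnion.mpr ⟨hc, hVmem _ _⟩⟩⟩
      · right
        rw [hO2]
        exact mem_iUnion.mpr ⟨w, mem_iUnion.mpr ⟨hw, mem_iUnion.mpr ⟨hc, hVmem _ _⟩⟩⟩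
    have hne1 : (Gs ∩ O1).Nonempty :=
      ⟨y, hy, by rw [hO1]; exact mem_iUnion.mpr ⟨y, mem_iUnion.mpr ⟨hy, mem_iUnion.mpr ⟨rfl, hVmem _ _⟩⟩⟩⟩
    have hne2 : (Gs ∩ O2).Nonempty :=
      ⟨z, hz, by rw [hO2]; exact mem_iUnion.mpr ⟨z, mem_iUnion.mpr ⟨hz, mem_iUnion.mpr
        ⟨fun hc => hne hc.symm, hVmem _ _⟩⟩⟩⟩
    obtain ⟨u, _, hu1, hu2⟩ := hGc O1 O2 h1 h2 hcover hne1 hne2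
    rw [hO1] at hu1
    rw [hO2] at hu2
    simp only [mem_iUnion] at hu1 hu2
    obtain ⟨w1, hw1G, hw1e, hu1'⟩ := hu1
    obtain ⟨w2, hw2G, hw2e, hu2'⟩ := hu2
    have e1 := hVconst _ (hGsub hw1G) u hu1'
    have e2 := hVconst _ (hGsub hw2G) u hu2'
    exact hw2e (by rw [← e2, e1, hw1e])
  -- lift F to the reals
  have hFr : (Ioo (-ρ) ρ ∩ Circle.exp ⁻¹' F).Finite := by
    apply Set.Finite.of_finite_image (f := Circle.exp)
    · exact hFfin.subset (by rintro _ ⟨t, ht, rfl⟩; exact ht.2)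
    · intro s hs t ht he
      exact hinj s (Ioo_subset_Icc_self hs.1) t (Ioo_subset_Icc_self ht.1) he
  set P : Finset ℝ := insert (-ρ) (insert ρ hFr.toFinset) with hP
  have hmem_neg : -ρ ∈ P := by simp [hP]
  have hmem_pos : ρ ∈ P := by simp [hP]
  have hPIcc : ∀ q ∈ P, -ρ ≤ q ∧ q ≤ ρ := by
    intro q hq
    rw [hP] at hq
    simp only [Finset.mem_insert, Set.Finite.mem_toFinset] at hq
    rcases hq with rfl | rfl | hq
    · constructor <;> linarith
    · constructor <;> linarith
    · exact ⟨le_of_lt hq.1.1, le_of_lt hq.1.2⟩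
  have hFrP : ∀ t ∈ Ioo (-ρ) ρ, Circle.exp t ∈ F → t ∈ P := by
    intro t ht hF'
    rw [hP]
    simp only [Finset.mem_insert, Set.Finite.mem_toFinset]
    exact Or.inr (Or.inr ⟨ht, hF'⟩)
  -- successor point in P
  set nxt : ℝ → ℝ := fun q =>
    if hq : (P.filter (fun p => q < p)).Nonempty then (P.filter (fun p => q < p)).min' hq
    else ρ with hnxt
  have hnxt_spec : ∀ q ∈ P, q < ρ → nxt q ∈ P ∧ q < nxt q ∧ ∀ p ∈ P, q < p → nxt q ≤ p := by
    intro q hq hqρ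
    have hne : (P.filter (fun p => q < p)).Nonempty :=
      ⟨ρ, Finset.mem_filter.mpr ⟨hmem_pos, hqρ⟩⟩
    have hval : nxt q = (P.filter (fun p => q < p)).min' hne := by
      simp only [hnxt]
      exact dif_pos hne
    have h1 := (P.filter (fun p => q < p)).min'_mem hne
    rw [Finset.mem_filter] at h1
    refine ⟨by rw [hval]; exact h1.1, by rw [hval]; exact h1.2, ?_⟩
    intro p hp hqp
    rw [hval]
    exact Finset.min'_le _ _ (Finset.mem_filter.mpr ⟨hp, hqp⟩)
  have hgapP : ∀ q ∈ P, q < ρ → ∀ t ∈ Ioo q (nxt q), t ∉ P := by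
    intro q hq hqρ t ht htP
    have := (hnxt_spec q hq hqρ).2.2 t htP ht.1
    linarith [ht.2]
  -- indexing of the gaps
  set Q : Finset ℝ := P.filter (fun q => q < ρ) with hQ
  have hQne : Q.Nonempty := ⟨-ρ, Finset.mem_filter.mpr ⟨hmem_neg, by linarith⟩⟩
  have hkpos : 0 < Q.card := Finset.card_pos.mpr hQne
  set pt : Fin Q.card → ℝ := fun i => ((Q.equivFin.symm i : Q) : ℝ) with hpt
  have hptQ : ∀ i, pt i ∈ Q := fun i => (Q.equivFin.symm i).2
  have hptinj : Function.Injective pt := fun i j hij =>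
    Q.equivFin.symm.injective (Subtype.ext hij)
  have hQmem : ∀ i, pt i ∈ P ∧ pt i < ρ := by
    intro i
    have := hptQ i
    rw [hQ, Finset.mem_filter] at this
    exact this
  set Jset : Fin Q.card → Set Circle := fun i => Circle.exp '' Ioo (pt i) (nxt (pt i)) with hJset
  set hgt : Fin Q.card → ℕ :=
    fun i => Rokh.ret hmain (Circle.exp ((pt i + nxt (pt i)) / 2)) with hhgt
  have hilt : ∀ i, pt i < nxt (pt i) := fun i => (hnxt_spec _ (hQmem i).1 (hQmem i).2).2.1
  have hgapIoo : ∀ i, Ioo (pt i) (nxt (pt i)) ⊆ Ioo (-ρ) ρ := by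
    intro i t ht
    have h1 := (hPIcc _ (hQmem i).1).1
    have h2 := (hnxt_spec _ (hQmem i).1 (hQmem i).2).2.2 ρ hmem_pos (hQmem i).2
    exact ⟨lt_of_le_of_lt h1 ht.1, lt_of_lt_of_le ht.2 h2⟩
  have hmid : ∀ i, (pt i + nxt (pt i)) / 2 ∈ Ioo (pt i) (nxt (pt i)) := by
    intro i
    constructor <;> [linarith [hilt i]; linarith [hilt i]]
  have hJsub : ∀ i, Jset i ⊆ U \ F := by
    rintro i _ ⟨t, ht, rfl⟩
    refine ⟨mem_image_of_mem _ (hgapIoo i ht), fun hF' => ?_⟩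
    exact hgapP _ (hQmem i).1 (hQmem i).2 t ht (hFrP t (hgapIoo i ht) hF')
  have hJne : ∀ i, (Jset i).Nonempty := fun i => ⟨_, mem_image_of_mem _ (hmid i)⟩
  have hJpre : ∀ i, IsPreconnected (Jset i) := fun i =>
    isPreconnected_Ioo.image _ Circle.exp.continuous.continuousOn
  have hretJ : ∀ i, ∀ y ∈ Jset i, Rokh.ret hmain y = hgt i := by
    intro i y hy
    exact hconst (Jset i) (hJsub i) (hJpre i) y hy _ (mem_image_of_mem _ (hmid i))
  have hhn : ∀ i, n ≤ hgt i := by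
    intro i
    have h1 := hJsub i (mem_image_of_mem _ (hmid i))
    exact hretn _ h1.1
  have hJopen : ∀ i, IsOpen (Jset i) := fun i =>
    isLocalHomeomorph_circleExp.isOpenMap _ isOpen_Ioo
  have hJproper : ∀ i, Jset i ≠ univ := by
    intro i h
    have hmem : Circle.exp ρ ∈ Jset i := h ▸ mem_univ _
    obtain ⟨t, ht, hte⟩ := hmem
    have heq := hinj t (Ioo_subset_Icc_self (hgapIoo i ht)) ρ
      (right_mem_Icc.mpr (by linarith)) hte
    linarith [(hgapIoo i ht).2, heq.le]
  have hJdisj : ∀ i i', i ≠ i' → ∀ y, y ∈ Jset i → y ∈ Jset i' → False := by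
    intro i i' hne y hy hy'
    obtain ⟨t, ht, rfl⟩ := hy
    obtain ⟨t', ht', hte⟩ := hy'
    have hteq : t' = t := hinj t' (Ioo_subset_Icc_self (hgapIoo i' ht')) t
      (Ioo_subset_Icc_self (hgapIoo i ht)) hte
    subst hteq
    have hptne : pt i ≠ pt i' := fun h => hne (hptinj h)
    have key : ∀ a b : Fin Q.card, pt a < pt b → t' ∈ Ioo (pt a) (nxt (pt a)) →
        t' ∈ Ioo (pt b) (nxt (pt b)) → False := by
      intro a b hab h1 h2
      have h3 : nxt (pt a) ≤ pt b :=
        (hnxt_spec _ (hQmem a).1 (hQmem a).2).2.2 _ (hQmem b).1 hab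
      linarith [h1.2, h2.1]
    rcases hptne.lt_or_gt with h | h
    · exact key i i' h ht ht'
    · exact key i' i h ht' ht
  have hcoverUF : U \ F ⊆ ⋃ i, Jset i := by
    rintro y ⟨⟨t, ht, rfl⟩, hyF⟩
    have htP : t ∉ P := by
      intro htP
      rw [hP] at htP
      simp only [Finset.mem_insert, Set.Finite.mem_toFinset] at htP
      rcases htP with rfl | rfl | hmem
      · exact absurd ht.1 (lt_irrefl _)
      · exact absurd ht.2 (lt_irrefl _)
      · exact hyF hmem.2
    have hqne : (P.filter (fun p => p < t)).Nonempty :=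
      ⟨-ρ, Finset.mem_filter.mpr ⟨hmem_neg, ht.1⟩⟩
    have hqmem := (P.filter (fun p => p < t)).max'_mem hqne
    rw [Finset.mem_filter] at hqmem
    have hqQ : (P.filter (fun p => p < t)).max' hqne ∈ Q :=
      Finset.mem_filter.mpr ⟨hqmem.1, lt_trans hqmem.2 ht.2⟩
    refine mem_iUnion.mpr ⟨Q.equivFin ⟨_, hqQ⟩, t, ?_, rfl⟩
    have hpti : pt (Q.equivFin ⟨_, hqQ⟩) = (P.filter (fun p => p < t)).max' hqne := by
      simp only [hpt, Equiv.symm_apply_apply]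
    rw [hpti]
    refine ⟨hqmem.2, ?_⟩
    by_contra hge
    push_neg at hge
    have hspecq := hnxt_spec _ hqmem.1 (lt_trans hqmem.2 ht.2)
    have hlt : nxt ((P.filter (fun p => p < t)).max' hqne) < t :=
      lt_of_le_of_ne hge (fun h => htP (h ▸ hspecq.1))
    have hle := Finset.le_max' (P.filter (fun p => p < t)) _
      (Finset.mem_filter.mpr ⟨hspecq.1, hlt⟩)
    linarith [hspecq.2.1]
  -- assemble everything
  refine ⟨Q.card, Jset, hgt, hkpos, ?_, hhn, ?_, ?_⟩
  · intro i
    exact ⟨hJopen i, ⟨hJne i, hJpre i⟩, hJproper i⟩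
  · intro i i' j j' hj hj' hne
    rw [Set.disjoint_left]
    rintro w ⟨y, hy, rfl⟩ ⟨z, hz, hwz⟩
    have hyU := (hJsub i hy).1
    have hzU := (hJsub i' hz).1
    have hjy : j < Rokh.ret hmain y := by
      rw [hretJ i y hy]
      have := hhn i
      omega
    have hjz : j' < Rokh.ret hmain z := by
      rw [hretJ i' z hz]
      have := hhn i'
      omega
    obtain ⟨hjj, hyz⟩ := Rokh.tower_disj hmain hyU hzU hjy hjz hwz.symm
    subst hyz
    rcases eq_or_ne i i' with hii | hii
    · exact hne (by rw [hii, hjj])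
    · exact hJdisj i i' hii y hy hz
  · apply Set.Finite.subset (Set.Finite.biUnion (Set.finite_Icc 0 M)
      (fun m _ => hFfin.image ((⇑α)^[m])))
    rintro w ⟨-, hw⟩
    obtain ⟨y, hyU, m, hm, hmw⟩ := Rokh.tower_cover hmain hback w
    subst hmw
    by_cases hyF : y ∈ F
    · refine mem_iUnion₂.mpr ⟨m, ?_, mem_image_of_mem _ hyF⟩
      simp only [mem_Icc]
      have := hM y
      omega
    · exfalso
      apply hw
      obtain ⟨i, hi⟩ := mem_iUnion.mp (hcoverUF ⟨hyU, hyF⟩)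
      refine mem_iUnion.mpr ⟨i, mem_iUnion₂.mpr ⟨m, ?_, mem_image_of_mem _ hi⟩⟩
      simp only [mem_Iic]
      have h1 := hretJ i y hi
      have h2 := hhn i
      omega
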